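/- Let ν be a symmetric Lévy measure on ℝ^d and u ∈ C_c^∞(ℝ^d). Writing u⁻(x) := min(u(x), 0) for the negative part of u, the integral ∫_{ℝ^d} u⁻(x) Lu(x) dx is well defined and satisfies ∫_{ℝ^d} u⁻(x) Lu(x) dx ≤ 0. -/

import Mathlib

open MeasureTheory

lemma second_diff_bound {d : ℕ} {u : EuclideanSpace ℝ (Fin d) → ℝ}
    (hu : ContDiff ℝ (⊤ : ℕ∞) u) (hcu : HasCompactSupport u) :
    ∃ K : ℝ, 0 ≤ K ∧ ∀ (x y : EuclideanSpace ℝ (Fin d)),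
      |u (x + y) + u (x - y) - 2 * u x| ≤ K * min 1 (‖y‖ ^ 2) := by
  obtain ⟨M, hM⟩ := hcu.exists_bound_of_continuous hu.continuous
  have hM0 : 0 ≤ M := le_trans (norm_nonneg _) (hM 0)
  obtain ⟨L, hL⟩ := ContDiff.lipschitzWith_of_hasCompactSupport (hcu.fderiv ℝ)
      (hu.fderiv_right (m := (⊤:ℕ∞)) (le_of_eq rfl)) (by simp)
  refine ⟨max (4 * M) (2 * L), le_trans (by linarith) (le_max_left _ _), fun x y => ?_⟩
  have hub : |u (x + y) + u (x - y) - 2 * u x| ≤ 4 * M := by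
    have h1 : |u (x + y)| ≤ M := by simpa using hM (x + y)
    have h2 : |u (x - y)| ≤ M := by simpa using hM (x - y)
    have h3 : |u x| ≤ M := by simpa using hM x
    rw [abs_le] at h1 h2 h3 ⊢
    constructor <;> [skip; skip] <;> nlinarith [h1.1, h1.2, h2.1, h2.2, h3.1, h3.2]
  have hL2 : |u (x + y) + u (x - y) - 2 * u x| ≤ 2 * L * ‖y‖ * ‖y‖ := by
    set g : ℝ → ℝ := fun t => u (x + t • y) + u (x - t • y) with hgdef
    set g' : ℝ → ℝ := fun t => (fderiv ℝ u (x + t • y)) y - (fderiv ℝ u (x - t • y)) y with hg'def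
    have hg : ∀ t ∈ Set.Icc (0:ℝ) 1, HasDerivWithinAt g (g' t) (Set.Icc (0:ℝ) 1) t := by
      intro t ht
      have h1 : HasDerivAt (fun t : ℝ => x + t • y) y t := by
        simpa using ((hasDerivAt_id t).smul_const y).const_add x
      have h2 : HasDerivAt (fun t : ℝ => x - t • y) (-y) t := by
        simpa [sub_eq_add_neg] using (((hasDerivAt_id t).smul_const y).neg).const_add x
      have d1 := ((hu.differentiable (by simp)) (x + t • y)).hasFDerivAt.comp_hasDerivAt t h1
      have d2 := ((hu.differentiable (by simp)) (x - t • y)).hasFDerivAt.comp_hasDerivAt t h2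
      have := (d1.add d2).hasDerivWithinAt (s := Set.Icc (0:ℝ) 1)
      simpa [hgdef, hg'def, map_neg, sub_eq_add_neg, Function.comp_def, Pi.add_def] using this
    have hbound : ∀ t ∈ Set.Icc (0:ℝ) 1, ‖g' t‖ ≤ 2 * L * ‖y‖ * ‖y‖ := by
      intro t ht
      have hdist : ‖fderiv ℝ u (x + t • y) - fderiv ℝ u (x - t • y)‖ ≤ L * (2 * ‖y‖) := by
        have h1 := hL.dist_le_mul (x + t • y) (x - t • y)
        rw [dist_eq_norm, dist_eq_norm] at h1
        have heq : x + t • y - (x - t • y) = (2 * t) • y := by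
          rw [two_mul, add_smul]; abel
        rw [heq, norm_smul] at h1
        refine h1.trans ?_
        have h2 : |2 * t| ≤ 2 := by rw [abs_of_nonneg (by linarith [ht.1])]; linarith [ht.2]
        have hy : (0:ℝ) ≤ ‖y‖ := norm_nonneg _
        have h3 : ‖(2 * t : ℝ)‖ * ‖y‖ ≤ 2 * ‖y‖ := by
          apply mul_le_mul_of_nonneg_right _ hy
          rw [Real.norm_eq_abs]; exact h2
        exact mul_le_mul_of_nonneg_left h3 L.coe_nonneg
      have : ‖g' t‖ = ‖(fderiv ℝ u (x + t • y) - fderiv ℝ u (x - t • y)) y‖ := by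
        simp [hg'def]
      rw [this]
      calc ‖(fderiv ℝ u (x + t • y) - fderiv ℝ u (x - t • y)) y‖
          ≤ ‖fderiv ℝ u (x + t • y) - fderiv ℝ u (x - t • y)‖ * ‖y‖ :=
            ContinuousLinearMap.le_opNorm _ _
        _ ≤ (L * (2 * ‖y‖)) * ‖y‖ := by
            exact mul_le_mul_of_nonneg_right hdist (norm_nonneg _)
        _ = 2 * L * ‖y‖ * ‖y‖ := by ring
    have key := Convex.norm_image_sub_le_of_norm_hasDerivWithin_le hg hbound
      (convex_Icc 0 1) (Set.left_mem_Icc.mpr zero_le_one) (Set.right_mem_Icc.mpr zero_le_one)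
    have hg1 : g 1 = u (x + y) + u (x - y) := by simp [hgdef]
    have hg0 : g 0 = u x + u x := by simp [hgdef]
    rw [hg1, hg0] at key
    simp only [sub_zero, norm_one, mul_one, Real.norm_eq_abs] at key
    calc |u (x + y) + u (x - y) - 2 * u x|
        = |u (x + y) + u (x - y) - (u x + u x)| := by ring_nf
      _ ≤ 2 * L * ‖y‖ * ‖y‖ := key
  rcases le_total (‖y‖ ^ 2) 1 with h | h
  · rw [min_eq_right h]
    calc |u (x + y) + u (x - y) - 2 * u x| ≤ 2 * L * ‖y‖ * ‖y‖ := hL2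
      _ = 2 * L * ‖y‖ ^ 2 := by ring
      _ ≤ max (4 * M) (2 * L) * ‖y‖ ^ 2 :=
        mul_le_mul_of_nonneg_right (le_max_right _ _) (sq_nonneg _)
  · rw [min_eq_left h, mul_one]
    exact hub.trans (le_max_left _ _)


lemma levy_sigmaFinite {d : ℕ} (ν : Measure (EuclideanSpace ℝ (Fin d)))
    (hν0 : ν {0} = 0)
    (hνint : Integrable (fun y => min 1 (‖y‖ ^ 2)) ν) : SigmaFinite ν := by
  refine ⟨⟨⟨fun n => {y | (1:ℝ)/(n+1) ≤ min 1 (‖y‖ ^ 2)} ∪ {0},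
    fun n => Set.mem_univ _, fun n => ?_, ?_⟩⟩⟩
  · refine lt_of_le_of_lt (measure_union_le _ _) ?_
    rw [hν0, add_zero]
    exact hνint.measure_ge_lt_top (by positivity)
  · ext y
    simp only [Set.mem_iUnion, Set.mem_union, Set.mem_setOf_eq, Set.mem_singleton_iff,
      Set.mem_univ, iff_true]
    by_cases hy : y = 0
    · exact ⟨0, Or.inr hy⟩
    · have hpos : 0 < min 1 (‖y‖ ^ 2) := by
        have : 0 < ‖y‖ := norm_pos_iff.mpr hy
        positivity
      obtain ⟨n, hn⟩ := exists_nat_one_div_lt hpos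
      exact ⟨n, Or.inl (le_of_lt hn)⟩

/-- The nonlocal operator `L u(x) = (1/2) ∫ (u(x+y) + u(x−y) − 2u(x)) ν(dy)`. -/
noncomputable def Lop {d : ℕ} (ν : Measure (EuclideanSpace ℝ (Fin d)))
    (u : EuclideanSpace ℝ (Fin d) → ℝ) (x : EuclideanSpace ℝ (Fin d)) : ℝ :=
  (1 / 2) * ∫ y, (u (x + y) + u (x - y) - 2 * u x) ∂ν

/-- For a symmetric Lévy measure ν and u ∈ C_c^∞(ℝ^d), writing
u⁻(x) := min(u(x),0), the integral ∫ u⁻(x) Lu(x) dx is well defined and ≤ 0. -/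
theorem stmt_5 (d : ℕ) (hd : 1 ≤ d)
    (ν : Measure (EuclideanSpace ℝ (Fin d)))
    (hν0 : ν {0} = 0)
    (hνsymm : ∀ A : Set (EuclideanSpace ℝ (Fin d)), MeasurableSet A → ν (-A) = ν A)
    (hνint : Integrable (fun y => min 1 (‖y‖ ^ 2)) ν)
    (u : EuclideanSpace ℝ (Fin d) → ℝ)
    (hu : ContDiff ℝ (⊤ : ℕ∞) u) (hcu : HasCompactSupport u) :
    Integrable (fun x => min (u x) 0 * Lop ν u x) ∧
    (∫ x, min (u x) 0 * Lop ν u x) ≤ 0 := by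
  haveI : SigmaFinite ν := levy_sigmaFinite ν hν0 hνint
  obtain ⟨K, hK0, hKb⟩ := second_diff_bound hu hcu
  set v : EuclideanSpace ℝ (Fin d) → ℝ := fun x => min (u x) 0 with hv
  have hvc : Continuous v := hu.continuous.min continuous_const
  have hvs : HasCompactSupport v := by
    apply hcu.mono
    intro x hx
    simp only [Function.mem_support] at hx ⊢
    intro h0; apply hx; simp [hv, h0]
  have hvi : Integrable v := hvc.integrable_of_hasCompactSupport hvs
  set g : EuclideanSpace ℝ (Fin d) × EuclideanSpace ℝ (Fin d) → ℝ :=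
    fun p => v p.1 * (u (p.1 + p.2) + u (p.1 - p.2) - 2 * u p.1) with hg
  have hgc : Continuous g := by
    apply Continuous.mul
    · exact hvc.comp continuous_fst
    · exact ((hu.continuous.comp (continuous_fst.add continuous_snd)).add
        (hu.continuous.comp (continuous_fst.sub continuous_snd))).sub
        (continuous_const.mul (hu.continuous.comp continuous_fst))
  have hgint : Integrable g (volume.prod ν) := by
    have hdom : Integrable (fun p : EuclideanSpace ℝ (Fin d) × EuclideanSpace ℝ (Fin d) =>
        (|v p.1| * K) * min 1 (‖p.2‖ ^ 2)) (volume.prod ν) :=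
      (hvi.abs.mul_const K).mul_prod hνint
    refine hdom.mono' hgc.aestronglyMeasurable ?_
    refine Filter.Eventually.of_forall fun p => ?_
    calc ‖g p‖ = |v p.1| * |u (p.1 + p.2) + u (p.1 - p.2) - 2 * u p.1| := by
          rw [Real.norm_eq_abs, hg, abs_mul]
      _ ≤ |v p.1| * (K * min 1 (‖p.2‖ ^ 2)) :=
          mul_le_mul_of_nonneg_left (hKb p.1 p.2) (abs_nonneg _)
      _ = (|v p.1| * K) * min 1 (‖p.2‖ ^ 2) := by ring
  have key : ∀ x, v x * Lop ν u x = (1/2) * ∫ y, g (x, y) ∂ν := by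
    intro x
    have h1 : ∫ y, g (x, y) ∂ν = v x * ∫ y, (u (x + y) + u (x - y) - 2 * u x) ∂ν := by
      simp only [hg]
      exact integral_const_mul _ _
    rw [h1, Lop]; ring
  have hint1 : Integrable (fun x => v x * Lop ν u x) := by
    have h2 := (hgint.integral_prod_left).const_mul (1/2 : ℝ)
    exact h2.congr (Filter.Eventually.of_forall fun x => (key x).symm)
  have hval : (∫ x, v x * Lop ν u x) = (1/2) * ∫ y, (∫ x, g (x, y)) ∂ν := by
    calc ∫ x, v x * Lop ν u x = ∫ x, (1/2) * ∫ y, g (x, y) ∂ν :=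
          integral_congr_ae (Filter.Eventually.of_forall key)
      _ = (1/2) * ∫ x, ∫ y, g (x, y) ∂ν := integral_const_mul _ _
      _ = (1/2) * ∫ z, g z ∂(volume.prod ν) := by rw [integral_prod g hgint]
      _ = (1/2) * ∫ y, (∫ x, g (x, y)) ∂ν := by rw [integral_prod_symm g hgint]
  have hinner : ∀ y, (∫ x, g (x, y)) ≤ 0 := by
    intro y
    have hcy : Continuous fun x : EuclideanSpace ℝ (Fin d) => x + y :=
      continuous_id.add continuous_const
    have hcy' : Continuous fun x : EuclideanSpace ℝ (Fin d) => x - y :=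
      continuous_id.sub continuous_const
    have hA : Integrable (fun x => v x * u (x + y)) :=
      (hvc.mul (hu.continuous.comp hcy)).integrable_of_hasCompactSupport hvs.mul_right
    have hB : Integrable (fun x => v x * u (x - y)) :=
      (hvc.mul (hu.continuous.comp hcy')).integrable_of_hasCompactSupport hvs.mul_right
    have hC : Integrable (fun x => v x * u x) :=
      (hvc.mul hu.continuous).integrable_of_hasCompactSupport hvs.mul_right
    have hA' : Integrable (fun x => v (x + y) * u x) :=
      ((hvc.comp hcy).mul hu.continuous).integrable_of_hasCompactSupport hcu.mul_left
    have hvsy : HasCompactSupport fun x : EuclideanSpace ℝ (Fin d) => v (x + y) :=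
      hvs.comp_homeomorph (Homeomorph.addRight y)
    have hC' : Integrable (fun x => v (x + y) * u (x + y)) :=
      ((hvc.comp hcy).mul (hu.continuous.comp hcy)).integrable_of_hasCompactSupport
        hvsy.mul_right
    have hwpos : 0 ≤ ∫ x, (v (x + y) - v x) * (u (x + y) - u x) := by
      apply integral_nonneg; intro x
      simp only [Pi.zero_apply]
      rcases le_total (u (x + y)) (u x) with h | h
      · have hv2 : v (x + y) ≤ v x := min_le_min h le_rfl
        nlinarith [mul_nonneg (sub_nonneg.mpr hv2) (sub_nonneg.mpr h)]
      · have hv2 : v x ≤ v (x + y) := min_le_min h le_rfl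
        nlinarith [mul_nonneg (sub_nonneg.mpr hv2) (sub_nonneg.mpr h)]
    have hsplit : (∫ x, g (x, y))
        = (∫ x, v x * u (x + y)) + (∫ x, v x * u (x - y)) - 2 * ∫ x, v x * u x := by
      have e : (fun x => g (x, y))
          = fun x => (v x * u (x + y) + v x * u (x - y)) - 2 * (v x * u x) := by
        ext x; simp only [hg]; ring
      have hAB : Integrable (fun x => v x * u (x + y) + v x * u (x - y)) := hA.add hB
      have hC2 : Integrable (fun x => 2 * (v x * u x)) := hC.const_mul 2
      rw [e, integral_sub hAB hC2, integral_add hA hB, integral_const_mul]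
    have t1 : (∫ x, v (x + y) * u (x + y)) = ∫ x, v x * u x :=
      integral_add_right_eq_self (μ := volume) (fun x => v x * u x) y
    have t2 : (∫ x, v (x + y) * u x) = ∫ x, v x * u (x - y) := by
      have h3 := integral_sub_right_eq_self (μ := volume) (fun x => v (x + y) * u x) y
      simp only [sub_add_cancel] at h3
      exact h3.symm
    have hwsplit : (∫ x, (v (x + y) - v x) * (u (x + y) - u x))
        = (∫ x, v x * u x) - (∫ x, v x * u (x - y)) - (∫ x, v x * u (x + y))
          + ∫ x, v x * u x := by
      have e : (fun x => (v (x + y) - v x) * (u (x + y) - u x))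
          = fun x => v (x + y) * u (x + y) - v (x + y) * u x - v x * u (x + y)
            + v x * u x := by ext x; ring
      have hCA : Integrable (fun x => v (x + y) * u (x + y) - v (x + y) * u x) := hC'.sub hA'
      have hCAA : Integrable
          (fun x => v (x + y) * u (x + y) - v (x + y) * u x - v x * u (x + y)) := hCA.sub hA
      rw [e, integral_add hCAA hC, integral_sub hCA hA, integral_sub hC' hA', t1, t2]
    rw [hwsplit] at hwpos
    rw [hsplit]; linarith
  refine ⟨hint1, ?_⟩
  rw [show (∫ x, min (u x) 0 * Lop ν u x) = ∫ x, v x * Lop ν u x from rfl, hval]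
  have h4 : (∫ y, (∫ x, g (x, y)) ∂ν) ≤ 0 := integral_nonpos hinner
  linarith
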